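/- Let λ be a unit-norm complex number that is π/4-strong (|arg λ| ≥ π/4), and let Λ be any unit-norm complex number. Then at least one of Λ and λΛ is π/8-strong; hence if b ∈ {0,1} is a uniform random bit, λ^b Λ is π/8-strong with probability at least 1/2. -/

import Mathlib

open scoped Classical

/-- Let `λ` be unit-norm and `π/4`-strong (`|arg λ| ≥ π/4`), and `Λ` any unit-norm complex
number.  Then at least one of `Λ` and `λΛ` is `π/8`-strong; hence for a uniform random bit
`b ∈ {0,1}`, `λ^b Λ` is `π/8`-strong with probability at least `1/2`. -/
theorem strong_shift (lam Lam : ℂ)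
    (hlam : ‖lam‖ = 1) (hLam : ‖Lam‖ = 1)
    (hstrong : Real.pi / 4 ≤ |Complex.arg lam|) :
    (Real.pi / 8 ≤ |Complex.arg Lam| ∨ Real.pi / 8 ≤ |Complex.arg (lam * Lam)|) ∧
      (1 : ℝ) / 2 ≤
        ((if Real.pi / 8 ≤ |Complex.arg Lam| then (1 : ℝ) else 0) +
            (if Real.pi / 8 ≤ |Complex.arg (lam * Lam)| then (1 : ℝ) else 0)) / 2 := by
  have hpi : (0:ℝ) < Real.pi := Real.pi_pos
  have hlam0 : lam ≠ 0 := by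
    intro h; simp [h] at hlam
  have hLam0 : Lam ≠ 0 := by
    intro h; simp [h] at hLam
  have key : Real.pi / 8 ≤ |Complex.arg Lam| ∨ Real.pi / 8 ≤ |Complex.arg (lam * Lam)| := by
    by_contra h
    push_neg at h
    obtain ⟨h1, h2⟩ := h
    have hmul : ((lam * Lam).arg : Real.Angle) = (lam.arg : Real.Angle) + (Lam.arg : Real.Angle) :=
      Complex.arg_mul_coe_angle hlam0 hLam0
    have heq : ((lam.arg : ℝ) : Real.Angle) = (((lam * Lam).arg - Lam.arg : ℝ) : Real.Angle) := by
      rw [Real.Angle.coe_sub, hmul]; abel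
    rw [Real.Angle.angle_eq_iff_two_pi_dvd_sub] at heq
    obtain ⟨k, hk⟩ := heq
    have hb1 : |Complex.arg lam| ≤ Real.pi := Complex.abs_arg_le_pi lam
    have hd : |(lam * Lam).arg - Lam.arg| < Real.pi / 4 := by
      calc |(lam * Lam).arg - Lam.arg| ≤ |(lam * Lam).arg| + |Lam.arg| := abs_sub _ _
        _ < Real.pi / 8 + Real.pi / 8 := by linarith
        _ = Real.pi / 4 := by ring
    have hkabs : |2 * Real.pi * (k:ℝ)| < 2 * Real.pi := by
      rw [← hk]
      calc |lam.arg - ((lam * Lam).arg - Lam.arg)|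
          ≤ |lam.arg| + |(lam * Lam).arg - Lam.arg| := abs_sub _ _
        _ < Real.pi + Real.pi / 4 := by linarith
        _ < 2 * Real.pi := by linarith
    have hk0 : k = 0 := by
      by_contra hk0
      have : (1:ℝ) ≤ |(k:ℝ)| := by
        rw [← Int.cast_abs]; exact_mod_cast Int.one_le_abs (by omega)
      have : 2 * Real.pi ≤ |2 * Real.pi * (k:ℝ)| := by
        rw [abs_mul, abs_of_pos (by linarith : (0:ℝ) < 2 * Real.pi)]
        nlinarith
      linarith
    rw [hk0] at hk
    simp at hk
    have : |lam.arg| < Real.pi / 4 := by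
      have : lam.arg = (lam * Lam).arg - Lam.arg := by linarith
      rw [this]; exact hd
    linarith
  refine ⟨key, ?_⟩
  rcases key with h | h
  · rw [if_pos h]
    have : (0:ℝ) ≤ (if Real.pi / 8 ≤ |Complex.arg (lam * Lam)| then (1 : ℝ) else 0) := by positivity
    linarith
  · rw [if_pos h]
    have : (0:ℝ) ≤ (if Real.pi / 8 ≤ |Complex.arg Lam| then (1 : ℝ) else 0) := by positivity
    linarith
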